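/- Let B ⊆ {0,...,M-1} and 0 < t < M. Then t is a period of B modulo M (i.e., (B + t) mod M = B) if and only if x^M - 1 divides (x^t - 1)·B(x) in ℤ[x], where B(x) = Σ_{b∈B} x^b. -/

import Mathlib

open Polynomial

private lemma coeff_sum_Xpow (S : Finset ℕ) (n : ℕ) :
    (∑ c ∈ S, (X:ℤ[X])^c).coeff n = if n ∈ S then 1 else 0 := by
  rw [finset_sum_coeff]; simp [coeff_X_pow, eq_comm]

private lemma deg_lt (B : Finset ℕ) (g : ℕ → ℕ) (M : ℕ) (_hM : 0 < M)
    (h : ∀ b ∈ B, g b < M) : (∑ b ∈ B, (X:ℤ[X])^(g b)).degree < M := by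
  apply lt_of_le_of_lt (degree_sum_le _ _)
  rw [Finset.sup_lt_iff (by exact_mod_cast WithBot.bot_lt_coe M)]
  intro b hb
  rw [degree_X_pow]
  exact_mod_cast h b hb

/-- `t` is a period of `B` mod `M` iff `x^M - 1 ∣ (x^t - 1)·B(x)`. -/
theorem stmt_8 (M t : ℕ) (B : Finset ℕ) (hB : B ⊆ Finset.range M)
    (ht : 0 < t) (htM : t < M) :
    (∀ x : ZMod M, x ∈ B.image (Nat.cast : ℕ → ZMod M) ↔
        x + (t : ZMod M) ∈ B.image (Nat.cast : ℕ → ZMod M)) ↔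
      ((X : ℤ[X]) ^ M - 1) ∣ ((X : ℤ[X]) ^ t - 1) * ∑ b ∈ B, (X : ℤ[X]) ^ b := by
  have hM : 0 < M := lt_trans ht htM
  haveI : NeZero M := ⟨hM.ne'⟩
  have hBlt : ∀ b ∈ B, b < M := fun b hb => Finset.mem_range.mp (hB hb)
  set f : ℕ → ℕ := fun b => (b + t) % M with hf
  have hflt : ∀ b, f b < M := fun b => Nat.mod_lt _ hM
  have hfinj : ∀ a ∈ B, ∀ b ∈ B, f a = f b → a = b := by
    intro a ha b hb hab
    have : a % M = b % M := by
      have h1 : (a + t) ≡ (b + t) [MOD M] := by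
        unfold Nat.ModEq; exact hab
      exact h1.add_right_cancel' t
    rwa [Nat.mod_eq_of_lt (hBlt a ha), Nat.mod_eq_of_lt (hBlt b hb)] at this
  -- RHS reduction
  have hdvd : ∀ b : ℕ, ((X:ℤ[X])^M - 1) ∣ ((X:ℤ[X])^(b+t) - X^(f b)) := by
    intro b
    have := Nat.div_add_mod (b + t) M
    have h1 : ((X:ℤ[X])^M - 1) ∣ ((X:ℤ[X])^(M * ((b+t)/M)) - 1) := by
      have := sub_dvd_pow_sub_pow ((X:ℤ[X])^M) 1 ((b+t)/M)
      simpa [← pow_mul] using this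
    have h2 : ((X:ℤ[X])^(b+t) - X^(f b)) = X^(f b) * ((X:ℤ[X])^(M * ((b+t)/M)) - 1) := by
      rw [mul_sub, mul_one, ← pow_add]
      congr 2
      simp only [hf]
      omega
    rw [h2]
    exact Dvd.dvd.mul_left h1 _
  have hred : (((X : ℤ[X]) ^ M - 1) ∣ ((X : ℤ[X]) ^ t - 1) * ∑ b ∈ B, (X : ℤ[X]) ^ b) ↔
      (∑ b ∈ B, (X:ℤ[X])^(f b)) = ∑ b ∈ B, (X:ℤ[X])^b := by
    have heq : ((X : ℤ[X]) ^ t - 1) * ∑ b ∈ B, (X : ℤ[X]) ^ b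
        = (∑ b ∈ B, ((X:ℤ[X])^(b+t) - X^(f b)))
          + ((∑ b ∈ B, (X:ℤ[X])^(f b)) - ∑ b ∈ B, (X:ℤ[X])^b) := by
      rw [sub_mul, one_mul, Finset.mul_sum, Finset.sum_sub_distrib]
      ring_nf
    constructor
    · intro h
      have hD : ((X:ℤ[X])^M - 1) ∣ ((∑ b ∈ B, (X:ℤ[X])^(f b)) - ∑ b ∈ B, (X:ℤ[X])^b) := by
        have hs : ((X:ℤ[X])^M - 1) ∣ (∑ b ∈ B, ((X:ℤ[X])^(b+t) - X^(f b))) :=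
          Finset.dvd_sum (fun b _ => hdvd b)
        have := dvd_sub h hs
        rw [heq] at this
        simpa using this
      have hdlt : ((∑ b ∈ B, (X:ℤ[X])^(f b)) - ∑ b ∈ B, (X:ℤ[X])^b).degree < ((X:ℤ[X])^M - 1).degree := by
        have hdM : ((X:ℤ[X])^M - 1).degree = M := by
          rw [degree_sub_eq_left_of_degree_lt] <;> simp [degree_X_pow]
          · exact_mod_cast hM
        rw [hdM]
        apply lt_of_le_of_lt (degree_sub_le _ _)
        exact max_lt (deg_lt B f M hM (fun b _ => hflt b)) (deg_lt B id M hM hBlt)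
      have := eq_zero_of_dvd_of_degree_lt hD hdlt
      exact sub_eq_zero.mp this
    · intro h
      rw [heq, h, sub_self, add_zero]
      exact Finset.dvd_sum (fun b _ => hdvd b)
  rw [hred]
  -- sum equality iff image equality
  have hsum_iff : ((∑ b ∈ B, (X:ℤ[X])^(f b)) = ∑ b ∈ B, (X:ℤ[X])^b) ↔ B.image f = B := by
    rw [← Finset.sum_image hfinj]
    constructor
    · intro h
      ext n
      have := congrArg (fun p => Polynomial.coeff p n) h
      simp only [coeff_sum_Xpow] at this
      by_cases h1 : n ∈ B.image f <;> by_cases h2 : n ∈ B <;> simp_all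
        <;> obtain ⟨a, ha, hA⟩ := h1 <;> exact this a ha hA
    · intro h; rw [h]
  rw [hsum_iff]
  -- now the combinatorial equivalence
  have hcast_inj : ∀ a < M, ∀ b < M, (a : ZMod M) = (b : ZMod M) → a = b := by
    intro a ha b hb h
    rw [← ZMod.val_cast_of_lt ha, ← ZMod.val_cast_of_lt hb, h]
  have hcastf : ∀ b : ℕ, ((f b : ZMod M)) = (b : ZMod M) + t := by
    intro b; rw [hf]; push_cast [ZMod.natCast_mod]; ring
  constructor
  · intro hper
    have hsub : B.image f ⊆ B := by
      intro c hc
      obtain ⟨b, hb, rfl⟩ := Finset.mem_image.mp hc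
      have h1 : ((b : ZMod M)) ∈ B.image (Nat.cast : ℕ → ZMod M) :=
        Finset.mem_image.mpr ⟨b, hb, rfl⟩
      have h2 := (hper _).mp h1
      obtain ⟨b', hb', hb'eq⟩ := Finset.mem_image.mp h2
      have : b' = f b := hcast_inj b' (hBlt b' hb') (f b) (hflt b) (by rw [hb'eq, hcastf])
      rwa [← this]
    exact Finset.eq_of_subset_of_card_le hsub (le_of_eq (Finset.card_image_of_injOn hfinj).symm)
  · intro him x
    constructor
    · intro hx
      obtain ⟨b, hb, rfl⟩ := Finset.mem_image.mp hx
      have : f b ∈ B := him ▸ Finset.mem_image_of_mem f hb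
      exact Finset.mem_image.mpr ⟨f b, this, by rw [hcastf]⟩
    · intro hx
      obtain ⟨b, hb, hbx⟩ := Finset.mem_image.mp hx
      rw [← him] at hb
      obtain ⟨b', hb', rfl⟩ := Finset.mem_image.mp hb
      have : x = (b' : ZMod M) := by
        have := hcastf b'
        rw [hbx] at this
        exact add_right_cancel this
      rw [this]
      exact Finset.mem_image_of_mem _ hb'
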